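/- Let f : A → B be a graph morphism between multigraphs. On the set P(B) ⊔ P(B) (the part set of the coproduct B + B, with coprojections i₀ and i₁), let ~ be the equivalence relation generated by the relation that identifies i₀(f_P(a)) with i₁(f_P(a)) for every a ∈ P(A). Then for every part e ∈ P(B), i₀(e) ~ i₁(e) holds if and only if e lies in the image of f_P. Consequently, the equalizer of the cokernel pair of f in Grphs is the inclusion of the image subgraph of f into B. -/
import Mathlib


/-- A multigraph: a vertex type, an edge type, and an incidence function
assigning to each edge an unordered pair of vertices. -/
structure Multigraph : Type 1 where
  V : Type
  E : Type
  ψ : E → Sym2 V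

namespace Multigraph

/-- The part set of a multigraph: vertices together with edges. -/
abbrev Part (G : Multigraph) : Type := G.V ⊕ G.E

/-- The incidence function extended to parts: a vertex `v` is incident to `{v,v}`. -/
def incid (G : Multigraph) : G.Part → Sym2 G.V
  | Sum.inl v => s(v, v)
  | Sum.inr e => G.ψ e

/-- A graph morphism: a function on part sets mapping vertices to vertices and
preserving incidence.  (The vertex map is recorded separately, but it is uniquely
determined by the part map.) -/
@[ext]
structure Hom (G H : Multigraph) where
  partMap : G.Part → H.Part
  vertMap : G.V → H.V
  partMap_vert : ∀ v : G.V, partMap (Sum.inl v) = Sum.inl (vertMap v)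
  incid_partMap : ∀ p : G.Part, H.incid (partMap p) = (G.incid p).map vertMap

/-- The identity graph morphism. -/
def Hom.id (G : Multigraph) : Hom G G where
  partMap := _root_.id
  vertMap := _root_.id
  partMap_vert := fun _ => rfl
  incid_partMap := fun p => by simp

/-- Composition of graph morphisms. -/
def Hom.comp {G H K : Multigraph} (g : Hom H K) (f : Hom G H) : Hom G K where
  partMap := g.partMap ∘ f.partMap
  vertMap := g.vertMap ∘ f.vertMap
  partMap_vert := fun v => by simp [f.partMap_vert, g.partMap_vert]
  incid_partMap := fun p => by
    simp [Function.comp, g.incid_partMap, f.incid_partMap, Sym2.map_map]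

/-- A strict graph morphism: a graph morphism that moreover maps edges to edges. -/
@[ext]
structure StrictHom (G H : Multigraph) extends Hom G H where
  edgeMap : G.E → H.E
  partMap_edge : ∀ e : G.E, partMap (Sum.inr e) = Sum.inr (edgeMap e)

/-- The identity strict graph morphism. -/
def StrictHom.id (G : Multigraph) : StrictHom G G where
  toHom := Hom.id G
  edgeMap := _root_.id
  partMap_edge := fun _ => rfl

/-- Composition of strict graph morphisms. -/
def StrictHom.comp {G H K : Multigraph} (g : StrictHom H K) (f : StrictHom G H) :
    StrictHom G K where
  toHom := g.toHom.comp f.toHom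
  edgeMap := g.edgeMap ∘ f.edgeMap
  partMap_edge := fun e => by
    simp [Hom.comp, f.partMap_edge, g.partMap_edge]

end Multigraph

section AuxImage

open Multigraph

variable {A B : Multigraph} (f : Hom A B)

lemma Multigraph.edge_preimage {e : B.E} {p : A.Part} (h : f.partMap p = Sum.inr e) :
    ∃ a : A.E, p = Sum.inr a := by
  cases p with
  | inl v => rw [f.partMap_vert] at h; exact absurd h (by simp)
  | inr a => exact ⟨a, rfl⟩

lemma Multigraph.psi_image_edge {e : B.E} {a : A.E}
    (h : f.partMap (Sum.inr a) = Sum.inr e) :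
    B.ψ e = (A.ψ a).map f.vertMap := by
  have h1 := f.incid_partMap (Sum.inr a)
  rw [h] at h1
  simpa [Multigraph.incid] using h1

lemma Multigraph.endpoint_mem {e : B.E} (he : Sum.inr e ∈ Set.range f.partMap) :
    ∀ w ∈ B.ψ e, Sum.inl w ∈ Set.range f.partMap := by
  obtain ⟨p, hp⟩ := he
  obtain ⟨a, rfl⟩ := Multigraph.edge_preimage f hp
  intro w hw
  rw [Multigraph.psi_image_edge f hp, Sym2.mem_map] at hw
  obtain ⟨u, _, rfl⟩ := hw
  exact ⟨Sum.inl u, f.partMap_vert u⟩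

lemma Multigraph.imagePsi_exists (e : {e : B.E // Sum.inr e ∈ Set.range f.partMap}) :
    ∃ s : Sym2 {v : B.V // Sum.inl v ∈ Set.range f.partMap},
      s.map Subtype.val = B.ψ e.val := by
  obtain ⟨p, hp⟩ := e.2
  obtain ⟨a, rfl⟩ := Multigraph.edge_preimage f hp
  refine ⟨(A.ψ a).map (fun u => ⟨f.vertMap u, ⟨Sum.inl u, f.partMap_vert u⟩⟩), ?_⟩
  rw [Sym2.map_map, Multigraph.psi_image_edge f hp]
  rfl

/-- The image subgraph of a graph morphism. -/
noncomputable def Multigraph.imageGraph : Multigraph where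
  V := {v : B.V // Sum.inl v ∈ Set.range f.partMap}
  E := {e : B.E // Sum.inr e ∈ Set.range f.partMap}
  ψ := fun e => Classical.choose (Multigraph.imagePsi_exists f e)

/-- The inclusion of the image subgraph into the codomain. -/
noncomputable def Multigraph.imageHom : Hom (Multigraph.imageGraph f) B where
  partMap := Sum.map Subtype.val Subtype.val
  vertMap := Subtype.val
  partMap_vert := fun _ => rfl
  incid_partMap := fun p => by
    cases p with
    | inl v => rfl
    | inr e =>
        show B.ψ e.val = _
        rw [← Classical.choose_spec (Multigraph.imagePsi_exists f e)]
        rfl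

lemma Multigraph.imageHom_injective : Function.Injective (Multigraph.imageHom f).partMap := by
  intro x y h
  cases x with
  | inl v =>
      cases y with
      | inl w =>
          have h' : (Sum.inl v.val : B.Part) = Sum.inl w.val := h
          exact congrArg Sum.inl (Subtype.ext (Sum.inl.inj h'))
      | inr w =>
          have h' : (Sum.inl v.val : B.Part) = Sum.inr w.val := h
          exact absurd h' (by simp)
  | inr v =>
      cases y with
      | inl w =>
          have h' : (Sum.inr v.val : B.Part) = Sum.inl w.val := h
          exact absurd h' (by simp)
      | inr w =>
          have h' : (Sum.inr v.val : B.Part) = Sum.inr w.val := h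
          exact congrArg Sum.inr (Subtype.ext (Sum.inr.inj h'))

/-- Lift a part of `B` in the range of `f` to a part of the image subgraph. -/
def Multigraph.liftPart : {b : B.Part} → b ∈ Set.range f.partMap → (Multigraph.imageGraph f).Part
  | Sum.inl v, hb => Sum.inl ⟨v, hb⟩
  | Sum.inr e, hb => Sum.inr ⟨e, hb⟩

lemma Multigraph.imageHom_liftPart {b : B.Part} (hb : b ∈ Set.range f.partMap) :
    (Multigraph.imageHom f).partMap (Multigraph.liftPart f hb) = b := by
  cases b <;> rfl

lemma Multigraph.range_imageHom :
    Set.range (Multigraph.imageHom f).partMap = Set.range f.partMap := by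
  apply Set.Subset.antisymm
  · rintro b ⟨p, rfl⟩
    cases p with
    | inl v => exact v.2
    | inr e => exact e.2
  · rintro b ⟨p, hp⟩
    exact ⟨Multigraph.liftPart f ⟨p, hp⟩, Multigraph.imageHom_liftPart f _⟩

/-- A test graph used to detect range membership via the pushout property. -/
def Multigraph.testGraph : Multigraph where
  V := Prop
  E := Prop × Sym2 Prop
  ψ := Prod.snd

/-- First test morphism: everything goes to `False`. -/
def Multigraph.testHom0 (B : Multigraph) : Hom B Multigraph.testGraph where
  partMap := fun p => match p with
    | Sum.inl _ => Sum.inl False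
    | Sum.inr e => Sum.inr (False, (B.ψ e).map (fun _ => False))
  vertMap := fun _ => False
  partMap_vert := fun _ => rfl
  incid_partMap := fun p => by cases p <;> rfl

/-- Second test morphism: records non-membership in the range of `f`. -/
def Multigraph.testHom1 : Hom B Multigraph.testGraph where
  partMap := fun p => match p with
    | Sum.inl v => Sum.inl (Sum.inl v ∉ Set.range f.partMap)
    | Sum.inr e => Sum.inr ((Sum.inr e ∉ Set.range f.partMap),
        (B.ψ e).map (fun v => (Sum.inl v ∉ Set.range f.partMap)))
  vertMap := fun v => (Sum.inl v ∉ Set.range f.partMap)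
  partMap_vert := fun _ => rfl
  incid_partMap := fun p => by cases p <;> rfl

lemma Multigraph.testHom_comp_eq :
    (Multigraph.testHom0 B).comp f = (Multigraph.testHom1 f).comp f := by
  apply Hom.ext
  · funext p
    show (Multigraph.testHom0 B).partMap (f.partMap p)
        = (Multigraph.testHom1 f).partMap (f.partMap p)
    have hmem : f.partMap p ∈ Set.range f.partMap := ⟨p, rfl⟩
    cases h : f.partMap p with
    | inl v =>
        rw [h] at hmem
        show Sum.inl False = Sum.inl (Sum.inl v ∉ Set.range f.partMap)
        rw [eq_false (not_not_intro hmem)]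
    | inr e =>
        rw [h] at hmem
        show (Sum.inr (False, (B.ψ e).map fun _ => False) : Multigraph.testGraph.Part)
            = Sum.inr ((Sum.inr e ∉ Set.range f.partMap),
                (B.ψ e).map (fun v => (Sum.inl v ∉ Set.range f.partMap)))
        congr 1
        refine Prod.ext ?_ ?_
        · exact (eq_false (not_not_intro hmem)).symm
        · exact Sym2.map_congr fun w hw =>
            (eq_false (not_not_intro (Multigraph.endpoint_mem f hmem w hw))).symm
  · funext v
    show False = (Sum.inl (f.vertMap v) ∉ Set.range f.partMap)
    exact (eq_false (not_not_intro ⟨Sum.inl v, f.partMap_vert v⟩)).symm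

lemma Multigraph.mem_range_of_eq {C : Multigraph} {i0 i1 : Hom B C}
    (hpush : ∀ (X : Multigraph) (j0 j1 : Hom B X), j0.comp f = j1.comp f →
      ∃! t : Hom C X, t.comp i0 = j0 ∧ t.comp i1 = j1)
    {b : B.Part} (hb : i0.partMap b = i1.partMap b) : b ∈ Set.range f.partMap := by
  by_contra hnb
  obtain ⟨t, ⟨ht0, ht1⟩, -⟩ :=
    hpush Multigraph.testGraph (Multigraph.testHom0 B) (Multigraph.testHom1 f)
      (Multigraph.testHom_comp_eq f)
  have h0 : (Multigraph.testHom0 B).partMap b = (Multigraph.testHom1 f).partMap b := by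
    rw [← ht0, ← ht1]
    show t.partMap (i0.partMap b) = t.partMap (i1.partMap b)
    rw [hb]
  cases b with
  | inl v =>
      have h1 : (Sum.inl False : Multigraph.testGraph.Part)
          = Sum.inl (Sum.inl v ∉ Set.range f.partMap) := h0
      have h2 := Sum.inl.inj h1
      rw [← h2] at hnb
      exact hnb
  | inr e =>
      have h1 : (Sum.inr (False, (B.ψ e).map fun _ => False) : Multigraph.testGraph.Part)
          = Sum.inr ((Sum.inr e ∉ Set.range f.partMap),
              (B.ψ e).map (fun v => (Sum.inl v ∉ Set.range f.partMap))) := h0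
      have h2 : False = (Sum.inr e ∉ Set.range f.partMap) :=
        congrArg Prod.fst (Sum.inr.inj h1)
      rw [← h2] at hnb
      exact hnb

end AuxImage

open Multigraph in
/-- For a graph morphism `f : A → B`, on the part set of the coproduct `B + B`
(with coprojections `Sum.inl` and `Sum.inr`), the equivalence relation generated by
identifying `inl (f a)` with `inr (f a)` for every part `a` of `A` relates `inl e`
and `inr e` exactly when `e` lies in the image of `f` on part sets.  Consequently,
the equalizer of the cokernel pair of `f` in **Grphs** is the inclusion of the image
subgraph of `f` into `B`: there is an injective morphism `ι : M → B` whose range on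
part sets is the range of `f`, and any such morphism equalizes the cokernel pair and
satisfies the universal property of the equalizer. -/
theorem cokernelPair_equalizer_is_image
    (A B : Multigraph) (f : Hom A B) :
    (∀ e : B.Part,
        Relation.EqvGen
          (fun x y : B.Part ⊕ B.Part =>
            ∃ a : A.Part, x = Sum.inl (f.partMap a) ∧ y = Sum.inr (f.partMap a))
          (Sum.inl e) (Sum.inr e) ↔
        e ∈ Set.range f.partMap) ∧
    (∀ (C : Multigraph) (i0 i1 : Hom B C),
        i0.comp f = i1.comp f →
        (∀ (X : Multigraph) (j0 j1 : Hom B X), j0.comp f = j1.comp f →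
          ∃! t : Hom C X, t.comp i0 = j0 ∧ t.comp i1 = j1) →
        ∃ (M : Multigraph) (ι : Hom M B),
          Function.Injective ι.partMap ∧
          Set.range ι.partMap = Set.range f.partMap ∧
          i0.comp ι = i1.comp ι ∧
          ∀ (X : Multigraph) (m : Hom X B), i0.comp m = i1.comp m →
            ∃! t : Hom X M, ι.comp t = m) := by
  constructor
  · -- Part 1: the generated equivalence relation detects the range of `f`.
    intro e
    constructor
    · intro h
      have hS : ∀ x y : B.Part ⊕ B.Part,
          Relation.EqvGen
            (fun x y : B.Part ⊕ B.Part =>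
              ∃ a : A.Part, x = Sum.inl (f.partMap a) ∧ y = Sum.inr (f.partMap a)) x y →
          x = y ∨ ∃ b, b ∈ Set.range f.partMap ∧
            ((x = Sum.inl b ∧ y = Sum.inr b) ∨ (x = Sum.inr b ∧ y = Sum.inl b)) := by
        intro x y hxy
        induction hxy with
        | rel x y hr =>
            obtain ⟨a, hx, hy⟩ := hr
            exact Or.inr ⟨f.partMap a, ⟨a, rfl⟩, Or.inl ⟨hx, hy⟩⟩
        | refl x => exact Or.inl rfl
        | symm x y _ ih =>
            rcases ih with rfl | ⟨b, hb, ⟨hx, hy⟩ | ⟨hx, hy⟩⟩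
            · exact Or.inl rfl
            · exact Or.inr ⟨b, hb, Or.inr ⟨hy, hx⟩⟩
            · exact Or.inr ⟨b, hb, Or.inl ⟨hy, hx⟩⟩
        | trans x y z _ _ ih1 ih2 =>
            rcases ih1 with rfl | ⟨b, hb, hbc⟩
            · exact ih2
            rcases ih2 with rfl | ⟨b', hb', hbc'⟩
            · exact Or.inr ⟨b, hb, hbc⟩
            rcases hbc with ⟨hx, hy⟩ | ⟨hx, hy⟩ <;>
              rcases hbc' with ⟨hx', hy'⟩ | ⟨hx', hy'⟩ <;> subst hx hy' <;> simp_all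
      rcases hS _ _ h with h' | ⟨b, hb, ⟨hx, _⟩ | ⟨hx, _⟩⟩
      · exact absurd h' (by simp)
      · obtain rfl : e = b := Sum.inl.inj hx
        exact hb
      · exact absurd hx (by simp)
    · rintro ⟨a, ha⟩
      exact Relation.EqvGen.rel _ _ ⟨a, by rw [ha], by rw [ha]⟩
  · -- Part 2: the image subgraph is the equalizer of the cokernel pair.
    intro C i0 i1 hcomp hpush
    have hpart : ∀ q : A.Part, i0.partMap (f.partMap q) = i1.partMap (f.partMap q) :=
      fun q => congrFun (congrArg Hom.partMap hcomp) q
    refine ⟨Multigraph.imageGraph f, Multigraph.imageHom f,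
      Multigraph.imageHom_injective f, Multigraph.range_imageHom f, ?_, ?_⟩
    · apply Hom.ext
      · funext p
        have hmem : (Multigraph.imageHom f).partMap p ∈ Set.range f.partMap := by
          rw [← Multigraph.range_imageHom f]; exact ⟨p, rfl⟩
        obtain ⟨q, hq⟩ := hmem
        show i0.partMap ((Multigraph.imageHom f).partMap p)
            = i1.partMap ((Multigraph.imageHom f).partMap p)
        rw [← hq]
        exact hpart q
      · funext v
        have hmem : Sum.inl v.val ∈ Set.range f.partMap := v.2
        obtain ⟨q, hq⟩ := hmem
        have h1 := hpart q
        rw [hq, i0.partMap_vert, i1.partMap_vert] at h1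
        exact Sum.inl.inj h1
    · intro X m hm
      have hmm : ∀ p : X.Part, m.partMap p ∈ Set.range f.partMap := by
        intro p
        exact Multigraph.mem_range_of_eq f hpush
          (congrFun (congrArg Hom.partMap hm) p)
      have hmv : ∀ x : X.V, Sum.inl (m.vertMap x) ∈ Set.range f.partMap := by
        intro x
        have := hmm (Sum.inl x)
        rwa [m.partMap_vert x] at this
      refine ⟨{ partMap := fun p => Multigraph.liftPart f (hmm p)
              , vertMap := fun x => ⟨m.vertMap x, hmv x⟩
              , partMap_vert := ?_
              , incid_partMap := ?_ }, ?_, ?_⟩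
      · intro x
        apply Multigraph.imageHom_injective f
        rw [Multigraph.imageHom_liftPart]
        exact m.partMap_vert x
      · intro p
        apply Sym2.map.injective (Subtype.val_injective :
          Function.Injective (Subtype.val : (Multigraph.imageGraph f).V → B.V))
        have h1 := (Multigraph.imageHom f).incid_partMap (Multigraph.liftPart f (hmm p))
        rw [Multigraph.imageHom_liftPart] at h1
        calc Sym2.map Subtype.val ((Multigraph.imageGraph f).incid (Multigraph.liftPart f (hmm p)))
            = B.incid (m.partMap p) := h1.symm
          _ = (X.incid p).map m.vertMap := m.incid_partMap p
          _ = Sym2.map Subtype.val ((X.incid p).map fun x =>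
                (⟨m.vertMap x, hmv x⟩ : (Multigraph.imageGraph f).V)) := by
              rw [Sym2.map_map]; rfl
      · apply Hom.ext
        · funext p
          exact Multigraph.imageHom_liftPart f (hmm p)
        · funext x
          rfl
      · intro t' ht'
        apply Hom.ext
        · funext p
          apply Multigraph.imageHom_injective f
          have h1 : (Multigraph.imageHom f).partMap (t'.partMap p) = m.partMap p :=
            congrFun (congrArg Hom.partMap ht') p
          rw [h1, Multigraph.imageHom_liftPart]
        · funext x
          apply Subtype.ext
          have h1 : ((Multigraph.imageHom f).vertMap (t'.vertMap x)) = m.vertMap x :=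
            congrFun (congrArg Hom.vertMap ht') x
          exact h1
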